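/- Let X, Z be indecomposable complexes in C_{η+2}(proj Λ) and let δ: X → Y → Z be an almost split sequence in C_{η+2}(proj Λ). If X^{η+2} = 0, Y^{η+2} = 0 and Z^{η+2} = 0, then [δ]_*: [X]_* → [Y]_* → [Z]_* is an almost split sequence in C_{η+1}(proj Λ). -/

import Mathlib

open CategoryTheory CategoryTheory.Limits ZeroObject

noncomputable section

namespace Paper

/-- The ambient category: cochain complexes of right `Λ`-modules indexed by `ℤ`. -/
abbrev Amb (Λ : Type) [Ring Λ] := CochainComplex (ModuleCat.{0} Λᵐᵒᵖ) ℤ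

variable {Λ : Type} [Ring Λ]

/-- All cells are finitely generated projective right `Λ`-modules. -/
def ProjCells (X : Amb Λ) : Prop :=
  ∀ i : ℤ, Module.Finite Λᵐᵒᵖ (X.X i) ∧ Module.Projective Λᵐᵒᵖ (X.X i)

/-- The complex is supported in the window `[a, b]`. -/
def Supp (a b : ℤ) (X : Amb Λ) : Prop :=
  ∀ i : ℤ, (i < a ∨ b < i) → IsZero (X.X i)

/-- Object of the category `C_{[a,b]}(proj Λ)` of complexes of finitely generated
projective modules concentrated in the window `[a, b]`.  (The category
`C_n(proj Λ)` of the paper corresponds to the window `[1, n]`; a window `[a, b]`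
corresponds to `C_{b-a+1}(proj Λ)` after the canonical reindexing.) -/
def InC (a b : ℤ) (X : Amb Λ) : Prop := Supp a b X ∧ ProjCells X

def IsSect {X Y : Amb Λ} (f : X ⟶ Y) : Prop := ∃ h : Y ⟶ X, f ≫ h = 𝟙 X

def IsRetr {X Y : Amb Λ} (f : X ⟶ Y) : Prop := ∃ h : Y ⟶ X, h ≫ f = 𝟙 Y

/-- `f` is irreducible in `C_{[a,b]}(proj Λ)`. -/
def Irred (a b : ℤ) {X Y : Amb Λ} (f : X ⟶ Y) : Prop :=
  ¬ IsSect f ∧ ¬ IsRetr f ∧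
    ∀ (W : Amb Λ), InC a b W → ∀ (g : X ⟶ W) (h : W ⟶ Y),
      g ≫ h = f → IsRetr h ∨ IsSect g

/-- Indecomposable complex. -/
def Indec (X : Amb Λ) : Prop :=
  ¬ IsZero X ∧ ∀ (A B : Amb Λ), (X ≅ A ⊞ B) → IsZero A ∨ IsZero B

/-- A conflation: in every degree a split short exact sequence. -/
def DegSplit {X Y Z : Amb Λ} (f : X ⟶ Y) (g : Y ⟶ Z) : Prop :=
  ∀ j : ℤ, ∃ w : f.f j ≫ g.f j = 0,
    Nonempty (ShortComplex.mk (f.f j) (g.f j) w).Splitting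

/-- Minimal left almost split morphism in `C_{[a,b]}(proj Λ)`. -/
def MinLeftAS (a b : ℤ) {X Y : Amb Λ} (f : X ⟶ Y) : Prop :=
  ¬ IsSect f ∧
    (∀ (W : Amb Λ), InC a b W → ∀ u : X ⟶ W, ¬ IsSect u → ∃ v : Y ⟶ W, f ≫ v = u) ∧
    (∀ u : Y ⟶ Y, f ≫ u = f → IsIso u)

/-- Minimal right almost split morphism in `C_{[a,b]}(proj Λ)`. -/
def MinRightAS (a b : ℤ) {Y Z : Amb Λ} (g : Y ⟶ Z) : Prop :=
  ¬ IsRetr g ∧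
    (∀ (W : Amb Λ), InC a b W → ∀ u : W ⟶ Z, ¬ IsRetr u → ∃ v : W ⟶ Y, v ≫ g = u) ∧
    (∀ u : Y ⟶ Y, u ≫ g = g → IsIso u)

/-- Almost split sequence in `C_{[a,b]}(proj Λ)`. -/
def AlmostSplit (a b : ℤ) {X Y Z : Amb Λ} (f : X ⟶ Y) (g : Y ⟶ Z) : Prop :=
  DegSplit f g ∧ MinLeftAS a b f ∧ MinRightAS a b g

/-- `X` (supported in a window starting at `a`) can be extended to the left. -/
def ExtLeft (a : ℤ) (X : Amb Λ) : Prop :=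
  ∃ P : ModuleCat.{0} Λᵐᵒᵖ, Module.Finite Λᵐᵒᵖ P ∧ Module.Projective Λᵐᵒᵖ P ∧
    ∃ δ : P ⟶ X.X a, δ ≠ 0 ∧ δ ≫ X.d a (a + 1) = 0

/-- `X` (supported in a window ending at `b`) can be extended to the right. -/
def ExtRight (b : ℤ) (X : Amb Λ) : Prop :=
  ∃ P : ModuleCat.{0} Λᵐᵒᵖ, Module.Finite Λᵐᵒᵖ P ∧ Module.Projective Λᵐᵒᵖ P ∧
    ∃ δ : X.X b ⟶ P, δ ≠ 0 ∧ X.d (b - 1) b ≫ δ = 0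

/-- Bounded complex. -/
def BddCplx (X : Amb Λ) : Prop := ∃ a b : ℤ, Supp a b X

/-- Contractible complex, i.e. zero in the homotopy category. -/
def Contractible (X : Amb Λ) : Prop := Nonempty (Homotopy (𝟙 X) 0)

/-- Indecomposable nonzero object of `K^b(proj Λ)`. -/
def HIndec (X : Amb Λ) : Prop :=
  ¬ Contractible X ∧
    ∀ (A B : Amb Λ), ProjCells A → BddCplx A → ProjCells B → BddCplx B →
      Nonempty (HomotopyEquiv X (A ⊞ B)) → Contractible A ∨ Contractible B

/-- The candidate lengths of `X` as an object of `K^b(proj Λ)`. -/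
def lenSet (X : Amb Λ) : Set ℕ :=
  {d | ∃ (Y : Amb Λ) (r s : ℤ), r ≤ s ∧ Nonempty (HomotopyEquiv X Y) ∧
        ProjCells Y ∧ Supp r s Y ∧ d = (s - r).toNat}

/-- `ℓ(X)`. -/
def len (X : Amb Λ) : ℕ := sInf (lenSet X)

/-- `η` is the strong global dimension of `Λ`. -/
def IsSGdim (Λ : Type) [Ring Λ] (η : ℕ) : Prop :=
  IsGreatest {d : ℕ | ∃ X : Amb Λ, ProjCells X ∧ BddCplx X ∧ HIndec X ∧ len X = d} η

/-- Brutal truncation of a complex to the set of degrees satisfying `P`. -/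
def chop (P : ℤ → Prop) [DecidablePred P] (X : Amb Λ) : Amb Λ where
  X i := if P i then X.X i else 0
  d i j :=
    if hi : P i then
      if hj : P j then
        eqToHom (if_pos hi) ≫ X.d i j ≫ eqToHom (if_pos hj).symm
      else 0
    else 0
  shape i j h := by
    by_cases hi : P i
    · by_cases hj : P j
      · simp [hi, hj, X.shape i j h]
      · simp [hi, hj]
    · simp [hi]
  d_comp_d' i j k hij hjk := by
    by_cases hi : P i <;> by_cases hj : P j <;> by_cases hk : P k <;>
      simp [hi, hj, hk]

/-- Brutal truncation of a chain map. -/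
def chopMap (P : ℤ → Prop) [DecidablePred P] {X Y : Amb Λ} (f : X ⟶ Y) :
    chop P X ⟶ chop P Y where
  f i :=
    if h : P i then eqToHom (if_pos h) ≫ f.f i ≫ eqToHom (if_pos h).symm
    else 0
  comm' i j hij := by
    by_cases hi : P i <;> by_cases hj : P j <;>
      simp [chop, hi, hj] <;> first | exact (comp_zero).symm | exact comp_zero

/-- `E_{[a,b]}`-projective complex (lifting against proper epimorphisms). -/
def EProj (a b : ℤ) (P : Amb Λ) : Prop :=
  ∀ (W₁ W₂ : Amb Λ), InC a b W₁ → InC a b W₂ → ∀ v : W₁ ⟶ W₂,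
    (∀ j : ℤ, Epi (v.f j)) → ∀ f : P ⟶ W₂, ∃ g : P ⟶ W₁, g ≫ v = f

/-- `E_{[a,b]}`-injective complex (extending along proper monomorphisms). -/
def EInj (a b : ℤ) (I : Amb Λ) : Prop :=
  ∀ (W₁ W₂ : Amb Λ), InC a b W₁ → InC a b W₂ → ∀ v : W₁ ⟶ W₂,
    (∀ j : ℤ, Mono (v.f j)) → ∀ f : W₁ ⟶ I, ∃ g : W₂ ⟶ I, v ≫ g = f

section Aux

variable {Λ : Type} [Ring Λ]

lemma chop_isZero (P : ℤ → Prop) [DecidablePred P] (X : Amb Λ) {i : ℤ} (hi : ¬ P i) :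
    IsZero ((chop P X).X i) := by
  dsimp [chop]
  rw [if_neg hi]
  exact isZero_zero _

/-- If the complex vanishes outside `P`, its brutal truncation is isomorphic to it. -/
def chopIso (P : ℤ → Prop) [DecidablePred P] (X : Amb Λ)
    (hz : ∀ i, ¬ P i → IsZero (X.X i)) : chop P X ≅ X where
  hom :=
    { f := fun i => if h : P i then eqToHom (if_pos h) else 0
      comm' := fun i j _ => by
        by_cases hi : P i
        · by_cases hj : P j
          · simp [chop, hi, hj]
          · exact (hz j hj).eq_of_tgt _ _
        · exact (chop_isZero P X hi).eq_of_src _ _ }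
  inv :=
    { f := fun i => if h : P i then eqToHom (if_pos h).symm else 0
      comm' := fun i j _ => by
        by_cases hi : P i
        · by_cases hj : P j
          · simp [chop, hi, hj]
          · exact (chop_isZero P X hj).eq_of_tgt _ _
        · exact (hz i hi).eq_of_src _ _ }
  hom_inv_id := by
    ext i : 1
    by_cases hi : P i
    · simp [hi]
      exact (eqToHom_trans _ _).trans (eqToHom_refl _ _)
    · exact (chop_isZero P X hi).eq_of_src _ _
  inv_hom_id := by
    ext i : 1
    by_cases hi : P i
    · simp [hi]
      exact (eqToHom_trans _ _).trans (eqToHom_refl _ _)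
    · exact (hz i hi).eq_of_src _ _

lemma chopMap_natural (P : ℤ → Prop) [DecidablePred P] {X Y : Amb Λ} (f : X ⟶ Y)
    (hzX : ∀ i, ¬ P i → IsZero (X.X i)) (hzY : ∀ i, ¬ P i → IsZero (Y.X i)) :
    chopMap P f ≫ (chopIso P Y hzY).hom = (chopIso P X hzX).hom ≫ f := by
  ext i : 1
  by_cases hi : P i
  · simp [chopMap, chopIso, hi]
    erw [eqToHom_trans, eqToHom_refl, Category.comp_id]
  · exact (hzY i hi).eq_of_tgt _ _

lemma chopMap_eq (P : ℤ → Prop) [DecidablePred P] {X Y : Amb Λ} (f : X ⟶ Y)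
    (hzX : ∀ i, ¬ P i → IsZero (X.X i)) (hzY : ∀ i, ¬ P i → IsZero (Y.X i)) :
    chopMap P f = (chopIso P X hzX).hom ≫ f ≫ (chopIso P Y hzY).inv := by
  rw [← Category.assoc, ← chopMap_natural P f hzX hzY]
  simp

/-- The `j`-th component of an isomorphism of complexes. -/
def isoF {X Y : Amb Λ} (e : X ≅ Y) (j : ℤ) : X.X j ≅ Y.X j where
  hom := e.hom.f j
  inv := e.inv.f j
  hom_inv_id := by rw [← HomologicalComplex.comp_f, e.hom_inv_id]; simp
  inv_hom_id := by rw [← HomologicalComplex.comp_f, e.inv_hom_id]; simp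

lemma split_conj {A B C A' B' C' : ModuleCat.{0} Λᵐᵒᵖ} (f : A ⟶ B) (g : B ⟶ C)
    (w : f ≫ g = 0) (sp : (ShortComplex.mk f g w).Splitting)
    (α : A' ≅ A) (β : B' ≅ B) (γ : C' ≅ C) :
    ∃ w' : (α.hom ≫ f ≫ β.inv) ≫ (β.hom ≫ g ≫ γ.inv) = 0,
      Nonempty (ShortComplex.mk (α.hom ≫ f ≫ β.inv) (β.hom ≫ g ≫ γ.inv) w').Splitting := by
  have w' : (α.hom ≫ f ≫ β.inv) ≫ (β.hom ≫ g ≫ γ.inv) = 0 := by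
    simp [reassoc_of% w]
  refine ⟨w', ⟨⟨β.hom ≫ sp.r ≫ α.inv, γ.hom ≫ sp.s ≫ β.inv, ?_, ?_, ?_⟩⟩⟩
  · have := sp.f_r
    dsimp at this ⊢
    simp [reassoc_of% this]
  · have := sp.s_g
    dsimp at this ⊢
    simp [reassoc_of% this]
  · have := sp.id
    dsimp at this ⊢
    calc (β.hom ≫ sp.r ≫ α.inv) ≫ α.hom ≫ f ≫ β.inv
        + (β.hom ≫ g ≫ γ.inv) ≫ γ.hom ≫ sp.s ≫ β.inv
        = β.hom ≫ (sp.r ≫ f + g ≫ sp.s) ≫ β.inv := by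
          simp [Preadditive.add_comp, Preadditive.comp_add]
      _ = 𝟙 B' := by rw [this]; simp

lemma almostSplit_transfer {a b a' b' : ℤ} {X Y Z X' Y' Z' : Amb Λ}
    (f : X ⟶ Y) (g : Y ⟶ Z) (f' : X' ⟶ Y') (g' : Y' ⟶ Z')
    (eX : X' ≅ X) (eY : Y' ≅ Y) (eZ : Z' ≅ Z)
    (hf : f' = eX.hom ≫ f ≫ eY.inv) (hg : g' = eY.hom ≫ g ≫ eZ.inv)
    (hsub : ∀ W : Amb Λ, InC a' b' W → InC a b W)
    (h : AlmostSplit a b f g) : AlmostSplit a' b' f' g' := by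
  obtain ⟨hds, ⟨hls1, hls2, hls3⟩, ⟨hrs1, hrs2, hrs3⟩⟩ := h
  subst hf hg
  refine ⟨?_, ⟨?_, ?_, ?_⟩, ⟨?_, ?_, ?_⟩⟩
  · -- DegSplit
    intro j
    obtain ⟨w, ⟨sp⟩⟩ := hds j
    have h' := split_conj (f.f j) (g.f j) w sp (isoF eX j) (isoF eY j) (isoF eZ j)
    simp only [HomologicalComplex.comp_f]
    exact h'
  · -- not section
    rintro ⟨h', hh⟩
    refine hls1 ⟨eY.inv ≫ h' ≫ eX.hom, ?_⟩
    have := congrArg (fun t => eX.inv ≫ t ≫ eX.hom) hh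
    simpa using this
  · -- left factorization
    intro W hW u hu
    have hu0 : ¬ IsSect (eX.inv ≫ u) := by
      rintro ⟨h', hh⟩
      refine hu ⟨h' ≫ eX.inv, ?_⟩
      have := congrArg (fun t => eX.hom ≫ t ≫ eX.inv) hh
      simpa using this
    obtain ⟨v, hv⟩ := hls2 W (hsub W hW) (eX.inv ≫ u) hu0
    refine ⟨eY.hom ≫ v, ?_⟩
    have := congrArg (fun t => eX.hom ≫ t) hv
    simpa using this
  · -- left minimality
    intro u hu
    have h0 : f ≫ (eY.inv ≫ u ≫ eY.hom) = f := by
      have := congrArg (fun t => eX.inv ≫ t ≫ eY.hom) hu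
      simpa using this
    have : IsIso (eY.inv ≫ u ≫ eY.hom) := hls3 _ h0
    have hu' : u = eY.hom ≫ (eY.inv ≫ u ≫ eY.hom) ≫ eY.inv := by simp
    rw [hu']
    infer_instance
  · -- not retraction
    rintro ⟨h', hh⟩
    refine hrs1 ⟨eZ.inv ≫ h' ≫ eY.hom, ?_⟩
    have := congrArg (fun t => eZ.inv ≫ t ≫ eZ.hom) hh
    simpa using this
  · -- right factorization
    intro W hW u hu
    have hu0 : ¬ IsRetr (u ≫ eZ.hom) := by
      rintro ⟨h', hh⟩
      refine hu ⟨eZ.hom ≫ h', ?_⟩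
      have := congrArg (fun t => eZ.hom ≫ t ≫ eZ.inv) hh
      simpa using this
    obtain ⟨v, hv⟩ := hrs2 W (hsub W hW) (u ≫ eZ.hom) hu0
    refine ⟨v ≫ eY.inv, ?_⟩
    have := congrArg (fun t => t ≫ eZ.inv) hv
    simpa using this
  · -- right minimality
    intro u hu
    have h0 : (eY.inv ≫ u ≫ eY.hom) ≫ g = g := by
      have := congrArg (fun t => eY.inv ≫ t ≫ eZ.hom) hu
      simpa using this
    have : IsIso (eY.inv ≫ u ≫ eY.hom) := hrs3 _ h0
    have hu' : u = eY.hom ≫ (eY.inv ≫ u ≫ eY.hom) ≫ eY.inv := by simp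
    rw [hu']
    infer_instance

end Aux

theorem statement8 (K : Type) [Field K] [IsAlgClosed K]
    (Λ : Type) [Ring Λ] [Algebra K Λ] [FiniteDimensional K Λ]
    (η : ℕ) (hη : 1 ≤ η) (hsgd : IsSGdim Λ η)
    (X Y Z : Amb Λ) (hX : InC 1 ((η : ℤ) + 2) X) (hY : InC 1 ((η : ℤ) + 2) Y)
    (hZ : InC 1 ((η : ℤ) + 2) Z) (hIX : Indec X) (hIZ : Indec Z)
    (f : X ⟶ Y) (g : Y ⟶ Z) (hδ : AlmostSplit 1 ((η : ℤ) + 2) f g)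
    (h1 : IsZero (X.X ((η : ℤ) + 2))) (h2 : IsZero (Y.X ((η : ℤ) + 2)))
    (h3 : IsZero (Z.X ((η : ℤ) + 2))) :
    AlmostSplit 1 ((η : ℤ) + 1)
      (chopMap (fun i => i ≤ (η : ℤ) + 1) f)
      (chopMap (fun i => i ≤ (η : ℤ) + 1) g) := by
  have hzX : ∀ i : ℤ, ¬ (i ≤ (η : ℤ) + 1) → IsZero (X.X i) := by
    intro i hi
    rcases eq_or_lt_of_le (by omega : (η : ℤ) + 2 ≤ i) with h | h
    · rw [← h]; exact h1
    · exact hX.1 i (Or.inr (by omega))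
  have hzY : ∀ i : ℤ, ¬ (i ≤ (η : ℤ) + 1) → IsZero (Y.X i) := by
    intro i hi
    rcases eq_or_lt_of_le (by omega : (η : ℤ) + 2 ≤ i) with h | h
    · rw [← h]; exact h2
    · exact hY.1 i (Or.inr (by omega))
  have hzZ : ∀ i : ℤ, ¬ (i ≤ (η : ℤ) + 1) → IsZero (Z.X i) := by
    intro i hi
    rcases eq_or_lt_of_le (by omega : (η : ℤ) + 2 ≤ i) with h | h
    · rw [← h]; exact h3
    · exact hZ.1 i (Or.inr (by omega))
  exact almostSplit_transfer f g _ _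
    (chopIso _ X hzX) (chopIso _ Y hzY) (chopIso _ Z hzZ)
    (chopMap_eq _ f hzX hzY) (chopMap_eq _ g hzY hzZ)
    (fun W hW => ⟨fun i hi => hW.1 i (by omega), hW.2⟩) hδ


end Paper
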